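/- Let α ∈ (0,1), β = 1−α, ρ > 0, n ≥ 1, λ : Fin n → ℝ with λ_j ≥ 0 for all j, Λ = Matrix.diagonal (fun j => (λ_j : ℂ)), and let W₂ ∈ Matrix (Fin n) (Fin n) ℂ be unitary (W₂ᴴ·W₂ = Iₙ) with |W₂ i j| = 1/√n for all i, j. Set M = W₂ᴴ·Λ·W₂. Then det(Iₙ + (α/β)·(Matrix.diagonal (fun i => (M i i) + 1/(β·ρ)))⁻¹·M) = Π_{j=1}^{n} (1 + α·ρ·n·λ_j/(n + (1−α)·ρ·Σ_i λ_i)). In particular, if exactly Nu of the λ_j are nonzero, the mutual information of the two-stage analog combining solution equals Σ_{k: λ_k ≠ 0} log₂(1 + αρ·n·λ_k/(n + (1−α)·ρ·Σ_i λ_i)). -/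

import Mathlib

open Matrix

/-- closed-form mutual information of the two-stage analog combining
solution (equation (29) in Theorem 1). -/
theorem stmt_5 {n : ℕ} (hn : 1 ≤ n) (α β ρ : ℝ)
    (hα : α ∈ Set.Ioo (0 : ℝ) 1) (hβ : β = 1 - α) (hρ : 0 < ρ)
    (l : Fin n → ℝ) (hl : ∀ j, 0 ≤ l j)
    (W₂ : Matrix (Fin n) (Fin n) ℂ) (hW₂u : W₂ᴴ * W₂ = 1)
    (hW₂m : ∀ i j, ‖W₂ i j‖ = 1 / Real.sqrt n)
    (M : Matrix (Fin n) (Fin n) ℂ)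
    (hM : M = W₂ᴴ * Matrix.diagonal (fun j => ((l j : ℝ) : ℂ)) * W₂) :
    ((1 + ((α / β : ℝ) : ℂ) •
        ((Matrix.diagonal (fun i => M i i + 1 / ((β * ρ : ℝ) : ℂ)))⁻¹ * M)).det
      = ∏ j, (((1 + α * ρ * n * l j / (n + (1 - α) * ρ * ∑ i, l i) : ℝ)) : ℂ))
    ∧
    Real.logb 2 (‖(1 + ((α / β : ℝ) : ℂ) •
          ((Matrix.diagonal (fun i => M i i + 1 / ((β * ρ : ℝ) : ℂ)))⁻¹ * M)).det‖)
      = ∑ k ∈ Finset.univ.filter (fun k : Fin n => l k ≠ 0),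
          Real.logb 2 (1 + α * ρ * n * l k / (n + (1 - α) * ρ * ∑ i, l i)) := by
  obtain ⟨hα0, hα1⟩ := hα
  subst hβ hM
  have hn0 : (0:ℝ) < n := by exact_mod_cast hn
  have hβ0 : (0:ℝ) < 1 - α := by linarith
  set S := ∑ i, l i with hSdef
  have hS : 0 ≤ S := Finset.sum_nonneg fun i _ => hl i
  have hD : 0 < (n:ℝ) + (1 - α) * ρ * S := by
    have := mul_nonneg (mul_nonneg hβ0.le hρ.le) hS
    linarith
  set Λ : Matrix (Fin n) (Fin n) ℂ := Matrix.diagonal (fun j => ((l j : ℝ) : ℂ)) with hΛ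
  -- diagonal entries of M
  have hnormsq : ∀ k i, star (W₂ k i) * W₂ k i = ((1 / n : ℝ) : ℂ) := by
    intro k i
    rw [mul_comm, show star (W₂ k i) = (starRingEnd ℂ) (W₂ k i) from rfl, Complex.mul_conj]
    congr 1
    have h1 : ‖W₂ k i‖ ^ 2 = (1 / Real.sqrt n) ^ 2 := by rw [hW₂m k i]
    rw [Complex.sq_norm] at h1
    rw [h1, div_pow, one_pow, Real.sq_sqrt hn0.le]
  have hdiag : ∀ i, (W₂ᴴ * Λ * W₂) i i = ((S / n : ℝ) : ℂ) := by
    intro i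
    rw [hΛ, Matrix.mul_apply]
    simp only [Matrix.mul_diagonal, Matrix.conjTranspose_apply]
    have h2 : ∀ k ∈ Finset.univ, star (W₂ k i) * ((l k : ℝ) : ℂ) * W₂ k i
        = ((l k : ℝ) : ℂ) * ((1 / n : ℝ) : ℂ) := by
      intro k _
      rw [mul_right_comm, mul_comm _ (((l k : ℝ) : ℂ)), hnormsq k i]
    rw [Finset.sum_congr rfl h2, hSdef]
    push_cast
    rw [Finset.sum_div]
    exact Finset.sum_congr rfl fun k _ => by ring
  -- the diagonal matrix is a constant multiple of the identity
  set cR : ℝ := S / n + 1 / ((1 - α) * ρ) with hcR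
  have hcR0 : 0 < cR := by
    have h1 : 0 ≤ S / n := div_nonneg hS hn0.le
    have h2 : 0 < 1 / ((1 - α) * ρ) := by positivity
    rw [hcR]; linarith
  have hDiagEq : Matrix.diagonal (fun i => (W₂ᴴ * Λ * W₂) i i + 1 / (((1 - α) * ρ : ℝ) : ℂ))
      = Matrix.diagonal (fun _ : Fin n => ((cR : ℝ) : ℂ)) := by
    rw [show (fun i => (W₂ᴴ * Λ * W₂) i i + 1 / (((1 - α) * ρ : ℝ) : ℂ))
        = (fun _ : Fin n => ((cR : ℝ) : ℂ)) from funext fun i => by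
      rw [hdiag i, hcR]; push_cast; ring]
  set tR : ℝ := α * ρ * n / ((n : ℝ) + (1 - α) * ρ * S) with htR
  have htc : ((α / (1 - α) : ℝ) : ℂ) * ((cR : ℝ) : ℂ)⁻¹ = ((tR : ℝ) : ℂ) := by
    rw [← Complex.ofReal_inv, ← Complex.ofReal_mul, Complex.ofReal_inj, hcR, htR]
    field_simp
    ring
  -- rewrite the matrix inside the determinant
  have hmat : (1 : Matrix (Fin n) (Fin n) ℂ) + ((α / (1 - α) : ℝ) : ℂ) •
      ((Matrix.diagonal (fun i => (W₂ᴴ * Λ * W₂) i i + 1 / (((1 - α) * ρ : ℝ) : ℂ)))⁻¹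
        * (W₂ᴴ * Λ * W₂))
      = W₂ᴴ * (1 + ((tR : ℝ) : ℂ) • Λ) * W₂ := by
    have hc0 : ((cR : ℝ) : ℂ) ≠ 0 := Complex.ofReal_ne_zero.mpr hcR0.ne'
    have hinv : (Matrix.diagonal (fun _ : Fin n => ((cR : ℝ) : ℂ)))⁻¹
        = Matrix.diagonal (fun _ : Fin n => ((cR : ℝ) : ℂ)⁻¹) := by
      apply Matrix.inv_eq_right_inv
      rw [Matrix.diagonal_mul_diagonal]
      simp [mul_inv_cancel₀ hc0]
    rw [hDiagEq, hinv, ← Matrix.smul_eq_diagonal_mul, smul_smul, htc]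
    rw [Matrix.mul_add, Matrix.add_mul, Matrix.mul_one, hW₂u, Matrix.mul_smul, Matrix.smul_mul]
  have hform : (1 : Matrix (Fin n) (Fin n) ℂ) + ((tR : ℝ) : ℂ) • Λ
      = Matrix.diagonal (fun j => 1 + ((tR : ℝ) : ℂ) * ((l j : ℝ) : ℂ)) := by
    ext i j
    rcases eq_or_ne i j with rfl | h
    · simp [hΛ, Matrix.add_apply, Matrix.smul_apply, Matrix.one_apply_eq,
        Matrix.diagonal_apply_eq, smul_eq_mul]
    · simp [hΛ, Matrix.one_apply_ne h, Matrix.diagonal_apply_ne _ h]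
  have hdetU : W₂ᴴ.det * W₂.det = 1 := by
    rw [← Matrix.det_mul, hW₂u, Matrix.det_one]
  have hfac : ∀ j, 1 + ((tR : ℝ) : ℂ) * ((l j : ℝ) : ℂ)
      = ((1 + α * ρ * n * l j / ((n : ℝ) + (1 - α) * ρ * S) : ℝ) : ℂ) := by
    intro j
    rw [htR]
    push_cast
    ring
  have hpart1 : ((1 : Matrix (Fin n) (Fin n) ℂ) + ((α / (1 - α) : ℝ) : ℂ) •
      ((Matrix.diagonal (fun i => (W₂ᴴ * Λ * W₂) i i + 1 / (((1 - α) * ρ : ℝ) : ℂ)))⁻¹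
        * (W₂ᴴ * Λ * W₂))).det
      = ∏ j, (((1 + α * ρ * n * l j / ((n : ℝ) + (1 - α) * ρ * S) : ℝ)) : ℂ) := by
    rw [hmat, Matrix.det_mul, Matrix.det_mul, mul_comm W₂ᴴ.det, mul_assoc, hdetU, mul_one,
      hform, Matrix.det_diagonal]
    exact Finset.prod_congr rfl fun j _ => hfac j
  refine ⟨hpart1, ?_⟩
  have hr : ∀ j, 0 < 1 + α * ρ * n * l j / ((n : ℝ) + (1 - α) * ρ * S) := by
    intro j
    have h1 : 0 ≤ α * ρ * n * l j := by
      have := hl j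
      positivity
    have h2 : 0 ≤ α * ρ * n * l j / ((n : ℝ) + (1 - α) * ρ * S) := div_nonneg h1 hD.le
    linarith
  have habs : ‖((1 : Matrix (Fin n) (Fin n) ℂ) + ((α / (1 - α) : ℝ) : ℂ) •
      ((Matrix.diagonal (fun i => (W₂ᴴ * Λ * W₂) i i + 1 / (((1 - α) * ρ : ℝ) : ℂ)))⁻¹
        * (W₂ᴴ * Λ * W₂))).det‖
      = ∏ j, (1 + α * ρ * n * l j / ((n : ℝ) + (1 - α) * ρ * S)) := by
    rw [hpart1, ← Complex.ofReal_prod, Complex.norm_real, Real.norm_eq_abs,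
      abs_of_pos (Finset.prod_pos fun j _ => hr j)]
  rw [habs, Real.logb_prod _ _ (fun j _ => (hr j).ne')]
  refine (Finset.sum_filter_of_ne ?_).symm
  intro k _ hne h0
  exact hne (by simp [h0])
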